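/- In the free noncommutative polynomial ring F⟨x,y⟩ in two noncommuting variables x and y, the polynomials 1 + xy and 1 + yx are stable associates: there exist a positive integer t and units P, Q ∈ F⟨x,y⟩^{(1+t)×(1+t)} such that (1+xy) ⊕ I_t = P·((1+yx) ⊕ I_t)·Q. -/

import Mathlib

open Matrix BigOperators

/-- The degree of an element of the free algebra: the maximal length of a word
with nonzero coefficient. -/
noncomputable def ncDeg {F : Type*} [Field F] {σ : Type*} (f : FreeAlgebra F σ) : ℕ :=
  (((FreeAlgebra.equivMonoidAlgebraFreeMonoid (R := F) (X := σ)) f).coeff.support.sup fun w => FreeMonoid.length w)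

/-- A noncommutative polynomial is irreducible if it has degree ≥ 1 and admits no
factorization into two factors of degree ≥ 1. -/
def NCIrred {F : Type*} [Field F] {σ : Type*} (f : FreeAlgebra F σ) : Prop :=
  1 ≤ ncDeg f ∧ ¬ ∃ g h : FreeAlgebra F σ, f = g * h ∧ 1 ≤ ncDeg g ∧ 1 ≤ ncDeg h

/-- The linear matrix `A0 + ∑ i, A i • x i` with scalar coefficient matrices. -/
noncomputable def linMatrix {F : Type*} [Field F] {σ α β : Type*} [Fintype σ]
    (A0 : Matrix α β F) (A : σ → Matrix α β F) : Matrix α β (FreeAlgebra F σ) :=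
  Matrix.of fun j k =>
    algebraMap F (FreeAlgebra F σ) (A0 j k) + ∑ i, A i j k • FreeAlgebra.ι F i

/-- A matrix over the free algebra is a linear matrix if each entry is an affine
linear form. -/
def IsLinearMat {F : Type*} [Field F] {σ α β : Type*} [Fintype σ]
    (M : Matrix α β (FreeAlgebra F σ)) : Prop :=
  ∃ (A0 : Matrix α β F) (A : σ → Matrix α β F), M = linMatrix A0 A

/-- A square matrix is full if it cannot be written as a product through a smaller
dimension. -/
def IsFullMat {R : Type*} [Semiring R] {α : Type*} [Fintype α]
    (M : Matrix α α R) : Prop :=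
  ¬ ∃ (e : ℕ) (_ : e < Fintype.card α)
      (M₁ : Matrix α (Fin e) R) (M₂ : Matrix (Fin e) α R), M = M₁ * M₂

/-- A full non-unit square matrix is an atom if it cannot be written as a product of
two full non-units. -/
def IsMatAtom {R : Type*} [Semiring R] {α : Type*} [Fintype α] [DecidableEq α]
    (M : Matrix α α R) : Prop :=
  IsFullMat M ∧ ¬ IsUnit M ∧
    ∀ A B : Matrix α α R, M = A * B →
      ¬ (IsFullMat A ∧ ¬ IsUnit A ∧ IsFullMat B ∧ ¬ IsUnit B)

/-- The coefficient family `A` is right monic: `[A_1 A_2 ⋯ ]` has full row rank. -/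
def RightMonicCoeffs {F : Type*} [Field F] {σ α : Type*} [Fintype σ] [Fintype α]
    (A : σ → Matrix α α F) : Prop :=
  (Matrix.of fun (j : α) (p : σ × α) => A p.1 j p.2).rank = Fintype.card α

/-- The coefficient family `A` is left monic: the stacked matrix has full column rank. -/
def LeftMonicCoeffs {F : Type*} [Field F] {σ α : Type*} [Fintype σ] [Fintype α]
    (A : σ → Matrix α α F) : Prop :=
  (Matrix.of fun (p : σ × α) (k : α) => A p.1 p.2 k).rank = Fintype.card α

/-- A right monic linear matrix. -/
def IsRightMonicLinear {F : Type*} [Field F] {σ α : Type*} [Fintype σ] [Fintype α]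
    (M : Matrix α α (FreeAlgebra F σ)) : Prop :=
  ∃ (A0 : Matrix α α F) (A : σ → Matrix α α F), M = linMatrix A0 A ∧ RightMonicCoeffs A

/-- A left monic linear matrix. -/
def IsLeftMonicLinear {F : Type*} [Field F] {σ α : Type*} [Fintype σ] [Fintype α]
    (M : Matrix α α (FreeAlgebra F σ)) : Prop :=
  ∃ (A0 : Matrix α α F) (A : σ → Matrix α α F), M = linMatrix A0 A ∧ LeftMonicCoeffs A

/-- `M ⊕ I_k` : block diagonal with blocks `M` and the `k × k` identity. -/
def oplusId {R : Type*} [Semiring R] {d : ℕ} (M : Matrix (Fin d) (Fin d) R) (k : ℕ) :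
    Matrix (Fin (d + k)) (Fin (d + k)) R :=
  Matrix.reindex finSumFinEquiv finSumFinEquiv (Matrix.fromBlocks M 0 0 1)

/-- A polynomial viewed as a `1 × 1` matrix. -/
def toMat1 {R : Type*} (f : R) : Matrix (Fin 1) (Fin 1) R := Matrix.of fun _ _ => f

/-- Block lower triangular matrix `[[A, 0], [D, B]]`. -/
def lowerBlocks {R : Type*} [Semiring R] {r s : ℕ}
    (A : Matrix (Fin r) (Fin r) R) (D : Matrix (Fin s) (Fin r) R)
    (B : Matrix (Fin s) (Fin s) R) : Matrix (Fin (r + s)) (Fin (r + s)) R :=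
  Matrix.reindex finSumFinEquiv finSumFinEquiv (Matrix.fromBlocks A 0 D B)

/-- `A` and `B` are stable associates: `A ⊕ I_t = P (B ⊕ I_t') Q` for units `P, Q`. -/
def StableAssoc {R : Type*} [Semiring R] {d d' : ℕ}
    (A : Matrix (Fin d) (Fin d) R) (B : Matrix (Fin d') (Fin d') R) : Prop :=
  ∃ (t t' : ℕ), 0 < t ∧ 0 < t' ∧ ∃ (h : d' + t' = d + t),
    ∃ P Q : Matrix (Fin (d + t)) (Fin (d + t)) R, IsUnit P ∧ IsUnit Q ∧
      oplusId A t = P * Matrix.reindex (finCongr h) (finCongr h) (oplusId B t') * Q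

/-- The dilated linear matrix `A0 ⊗ I_ℓ + ∑ i, A i ⊗ (Y i + M i)` in the matrix
variables `y_{i,j,k}`. -/
noncomputable def dilate {F : Type*} [Field F] {n d : ℕ}
    (A0 : Matrix (Fin d) (Fin d) F) (A : Fin n → Matrix (Fin d) (Fin d) F) (ℓ : ℕ)
    (M : Fin n → Matrix (Fin ℓ) (Fin ℓ) F) :
    Matrix (Fin d × Fin ℓ) (Fin d × Fin ℓ) (FreeAlgebra F (Fin n × Fin ℓ × Fin ℓ)) :=
  Matrix.of fun p q =>
    algebraMap F (FreeAlgebra F (Fin n × Fin ℓ × Fin ℓ))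
      (A0 p.1 q.1 * (if p.2 = q.2 then 1 else 0) + ∑ i, A i p.1 q.1 * M i p.2 q.2) +
      ∑ i : Fin n, A i p.1 q.1 • FreeAlgebra.ι F (i, p.2, q.2)

/-- The diagonal block of `M` corresponding to the fiber `b ⁻¹ {i}`, reindexed by `Fin`. -/
noncomputable def diagBlock {R : Type*} {d r : ℕ} (M : Matrix (Fin d) (Fin d) R)
    (b : Fin d → Fin r) (i : Fin r) :
    Matrix (Fin (Fintype.card {j : Fin d // b j = i}))
      (Fin (Fintype.card {j : Fin d // b j = i})) R :=
  Matrix.of fun x y =>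
    M ((Fintype.equivFin {j : Fin d // b j = i}).symm x : {j : Fin d // b j = i})
      ((Fintype.equivFin {j : Fin d // b j = i}).symm y : {j : Fin d // b j = i})


lemma oplusId_toMat1' {R : Type*} [Semiring R] (f : R) :
    oplusId (toMat1 f) 1 = !![f, 0; 0, 1] := by
  ext i j
  fin_cases i <;> fin_cases j <;>
    simp [oplusId, toMat1, Matrix.fromBlocks, finSumFinEquiv, Matrix.reindex_apply, Fin.addCases]

lemma isUnit_of_inv' {R : Type*} [Ring R] (M N : Matrix (Fin 2) (Fin 2) R)
    (h1 : M * N = 1) (h2 : N * M = 1) : IsUnit M := ⟨⟨M, N, h1, h2⟩, rfl⟩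

/-- in `F⟨x,y⟩` the polynomials `1 + xy` and `1 + yx` are stable
associates. -/
theorem one_add_xy_stable_assoc {F : Type*} [Field F] :
    ∃ (t : ℕ) (_ : 0 < t)
      (P Q : Matrix (Fin (1 + t)) (Fin (1 + t)) (FreeAlgebra F (Fin 2))),
      IsUnit P ∧ IsUnit Q ∧
      oplusId (toMat1 (1 + FreeAlgebra.ι F (0 : Fin 2) * FreeAlgebra.ι F (1 : Fin 2))) t =
        P * oplusId (toMat1 (1 + FreeAlgebra.ι F (1 : Fin 2) * FreeAlgebra.ι F (0 : Fin 2))) t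
          * Q := by
  set x := FreeAlgebra.ι F (0 : Fin 2)
  set y := FreeAlgebra.ι F (1 : Fin 2)
  refine ⟨1, one_pos, !![1 + x*y, x; y, 1] * !![0,1;1,0],
    !![0,1;1,0] * !![1+x*y, -x; -y, 1], ?_, ?_, ?_⟩
  · refine IsUnit.mul ?_ ?_
    · exact isUnit_of_inv' _ !![1, -x; -y, 1+y*x]
        (by ext i j; fin_cases i <;> fin_cases j <;>
          simp [Matrix.mul_apply, Fin.sum_univ_two, Matrix.one_apply] <;> noncomm_ring)
        (by ext i j; fin_cases i <;> fin_cases j <;>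
          simp [Matrix.mul_apply, Fin.sum_univ_two, Matrix.one_apply] <;> noncomm_ring)
    · exact isUnit_of_inv' _ !![0,1;1,0]
        (by ext i j; fin_cases i <;> fin_cases j <;>
          simp [Matrix.mul_apply, Fin.sum_univ_two, Matrix.one_apply])
        (by ext i j; fin_cases i <;> fin_cases j <;>
          simp [Matrix.mul_apply, Fin.sum_univ_two, Matrix.one_apply])
  · refine IsUnit.mul ?_ ?_
    · exact isUnit_of_inv' _ !![0,1;1,0]
        (by ext i j; fin_cases i <;> fin_cases j <;>
          simp [Matrix.mul_apply, Fin.sum_univ_two, Matrix.one_apply])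
        (by ext i j; fin_cases i <;> fin_cases j <;>
          simp [Matrix.mul_apply, Fin.sum_univ_two, Matrix.one_apply])
    · exact isUnit_of_inv' _ !![1, x; y, 1+y*x]
        (by ext i j; fin_cases i <;> fin_cases j <;>
          simp [Matrix.mul_apply, Fin.sum_univ_two, Matrix.one_apply] <;> noncomm_ring)
        (by ext i j; fin_cases i <;> fin_cases j <;>
          simp [Matrix.mul_apply, Fin.sum_univ_two, Matrix.one_apply] <;> noncomm_ring)
  · rw [oplusId_toMat1', oplusId_toMat1']
    ext i j
    fin_cases i <;> fin_cases j <;>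
      simp [Matrix.mul_apply, Fin.sum_univ_two] <;> noncomm_ring
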